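/- arXiv:1910.01732 — 2 statements merged into one kernel-verified Lean document; each statement's English description precedes it below -/
import Mathlib

section
/- For integers n, b with n/2 < b < n and s ≥ 0, define F_{n,b}(s) := (n/((n-b)·b·(b-1))) · ∫₀¹ (∑_{k=1}^{b-1} 1/(k-p)) / (Be(n-b, e^{-s}·p) · Be(b-1, 1-p)) dp. Let (b_n) be a sequence of integers with n/2 < b_n < n and b_n/n → u for some u ∈ [1/2, 1), and set α := log(1-u) - log u. Then lim_{n→∞} (n/log n)·F_{n,b_n}(0) = G(α)/(u(1-u)), where G(x) := (1+e^x)/(π²+x²). -/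
open Real

/-- The real Beta function. -/
noncomputable def Be (x y : ℝ) : ℝ := Real.Gamma x * Real.Gamma y / Real.Gamma (x + y)

/-- `F_{n,b}(s) = P(ℓ_{n,b} > s)` for the Bolthausen–Sznitman coalescent, `n/2 < b < n`. -/
noncomputable def F (n b : ℕ) (s : ℝ) : ℝ :=
  ((n : ℝ) / (((n : ℝ) - (b : ℝ)) * (b : ℝ) * ((b : ℝ) - 1))) *
    ∫ p in (0:ℝ)..1, (∑ k ∈ Finset.Icc 1 (b - 1), 1 / ((k : ℝ) - p)) /
      (Be ((n : ℝ) - (b : ℝ)) (Real.exp (-s) * p) * Be ((b : ℝ) - 1) (1 - p))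

/-- `G(x) = (1+e^x)/(π²+x²)`. -/
noncomputable def G (x : ℝ) : ℝ := (1 + Real.exp x) / (π ^ 2 + x ^ 2)

open Set MeasureTheory Filter

section aux

lemma gamma_ratio_upper {x p : ℝ} (hx : 0 < x) (hp0 : 0 ≤ p) (hp1 : p ≤ 1) :
    Gamma (x + p) ≤ Gamma x * x ^ p := by
  have h := Real.convexOn_log_Gamma.2 (mem_Ioi.2 hx) (mem_Ioi.2 (by linarith : (0:ℝ) < x + 1))
    (by linarith : (0:ℝ) ≤ 1 - p) hp0 (by ring)
  have hxp : (1 - p) • x + p • (x + 1) = x + p := by simp [smul_eq_mul]; ring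
  rw [hxp] at h
  simp only [Function.comp_apply, smul_eq_mul] at h
  have hG : 0 < Gamma x := Gamma_pos_of_pos hx
  have hG1 : 0 < Gamma (x + 1) := Gamma_pos_of_pos (by linarith)
  have hGp : 0 < Gamma (x + p) := Gamma_pos_of_pos (by linarith)
  have := Real.exp_le_exp.2 h
  rw [Real.exp_log hGp, Real.exp_add, ← Real.log_rpow hG, ← Real.log_rpow hG1,
    Real.exp_log (rpow_pos_of_pos hG _), Real.exp_log (rpow_pos_of_pos hG1 _)] at this
  calc Gamma (x + p) ≤ Gamma x ^ (1 - p) * Gamma (x + 1) ^ p := this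
    _ = Gamma x * x ^ p := by
        rw [Real.Gamma_add_one hx.ne', Real.mul_rpow hx.le hG.le,
          ← mul_assoc, mul_comm (Gamma x ^ (1-p)) (x ^ p), mul_assoc, ← Real.rpow_add hG]
        simp [mul_comm]

lemma gamma_ratio_lower {x p : ℝ} (hx : 0 < x) (hp0 : 0 ≤ p) (hp1 : p ≤ 1) :
    Gamma x * x ^ p * (x / (x + p)) ^ (1 - p) ≤ Gamma (x + p) := by
  have hxp : 0 < x + p := by linarith
  have h := Real.convexOn_log_Gamma.2 (mem_Ioi.2 hxp) (mem_Ioi.2 (by linarith : (0:ℝ) < x + p + 1))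
    hp0 (by linarith : (0:ℝ) ≤ 1 - p) (by ring)
  have hco : p • (x + p) + (1 - p) • (x + p + 1) = x + 1 := by simp [smul_eq_mul]; ring
  rw [hco] at h
  simp only [Function.comp_apply, smul_eq_mul] at h
  have hGp : 0 < Gamma (x + p) := Gamma_pos_of_pos hxp
  have hG1 : 0 < Gamma (x + 1) := Gamma_pos_of_pos (by linarith)
  have hGp1 : 0 < Gamma (x + p + 1) := Gamma_pos_of_pos (by linarith)
  have hkey : Gamma (x + 1) ≤ Gamma (x + p) ^ p * Gamma (x + p + 1) ^ (1 - p) := by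
    have := Real.exp_le_exp.2 h
    rwa [Real.exp_log hG1, Real.exp_add, ← Real.log_rpow hGp, ← Real.log_rpow hGp1,
      Real.exp_log (rpow_pos_of_pos hGp _), Real.exp_log (rpow_pos_of_pos hGp1 _)] at this
  have h2 : Gamma (x + p) ^ p * Gamma (x + p + 1) ^ (1 - p) = Gamma (x + p) * (x + p) ^ (1 - p) := by
    rw [Real.Gamma_add_one hxp.ne', Real.mul_rpow hxp.le hGp.le]
    have hh : Gamma (x+p) ^ p * Gamma (x+p) ^ (1-p) = Gamma (x+p) := by
      rw [← Real.rpow_add hGp]; simp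
    linear_combination ((x+p) ^ (1-p)) * hh
  rw [h2] at hkey
  have hgx : x * Gamma x ≤ Gamma (x + p) * (x + p) ^ (1 - p) := by
    rwa [Real.Gamma_add_one hx.ne'] at hkey
  have hpow : 0 < ((x + p) : ℝ) ^ (1 - p) := rpow_pos_of_pos hxp _
  rw [Real.div_rpow hx.le hxp.le, ← mul_div_assoc, div_le_iff₀ hpow]
  calc Gamma x * x ^ p * x ^ (1 - p) = x * Gamma x := by
        rw [mul_assoc, ← Real.rpow_add hx]; simp [mul_comm]
    _ ≤ Gamma (x + p) * (x + p) ^ (1 - p) := hgx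

lemma ratio_ub {x p : ℝ} (hx : 0 < x) (hp0 : 0 ≤ p) (hp1 : p ≤ 1) :
    Gamma (x + p) / (Gamma x * x ^ p) ≤ 1 := by
  have h := gamma_ratio_upper hx hp0 hp1
  have hpos : 0 < Gamma x * x ^ p := by
    have := Gamma_pos_of_pos hx
    positivity
  rw [div_le_one hpos]
  exact h

lemma ratio_lb {x p : ℝ} (hx : 0 < x) (hp0 : 0 ≤ p) (hp1 : p ≤ 1) :
    (x / (x + p)) ^ (1 - p) ≤ Gamma (x + p) / (Gamma x * x ^ p) := by
  have h := gamma_ratio_lower hx hp0 hp1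
  have hpos : 0 < Gamma x * x ^ p := by
    have := Gamma_pos_of_pos hx
    positivity
  rw [le_div_iff₀ hpos]
  linarith

lemma sum_inv_lower (m : ℕ) {p : ℝ} (hp0 : 0 ≤ p) (hp1 : p < 1) :
    (harmonic m : ℝ) ≤ ∑ k ∈ Finset.Icc 1 m, 1 / ((k : ℝ) - p) := by
  rw [harmonic_eq_sum_Icc]
  push_cast
  refine Finset.sum_le_sum fun k hk => ?_
  have hk1 : (1 : ℝ) ≤ (k : ℝ) := by exact_mod_cast (Finset.mem_Icc.1 hk).1
  rw [one_div]
  exact inv_anti₀ (by linarith) (by linarith)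

lemma sum_inv_upper_aux (m : ℕ) {p : ℝ} (hp0 : 0 ≤ p) (hp1 : p < 1) :
    ∑ k ∈ Finset.Icc 1 (m + 1), 1 / ((k : ℝ) - p) ≤ 1 / (1 - p) + (harmonic m : ℝ) := by
  induction m with
  | zero => simp
  | succ m ih =>
    rw [Finset.sum_Icc_succ_top (by omega : 1 ≤ m + 1 + 1), harmonic_succ]
    push_cast
    have h1 : 1 / ((m : ℝ) + 1 + 1 - p) ≤ ((m : ℝ) + 1)⁻¹ := by
      rw [one_div]
      exact inv_anti₀ (by positivity) (by linarith)
    linarith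

lemma sum_inv_upper (m : ℕ) {p : ℝ} (hp0 : 0 ≤ p) (hp1 : p < 1) :
    ∑ k ∈ Finset.Icc 1 m, 1 / ((k : ℝ) - p) ≤ 1 / (1 - p) + (harmonic m : ℝ) := by
  rcases Nat.eq_zero_or_pos m with rfl | hm
  · simp
    linarith [one_div_pos.2 (show (0:ℝ) < 1 - p by linarith)]
  · obtain ⟨m', rfl⟩ : ∃ m', m = m' + 1 := ⟨m - 1, by omega⟩
    refine (sum_inv_upper_aux m' hp0 hp1).trans ?_
    have : (harmonic m' : ℝ) ≤ (harmonic (m' + 1) : ℝ) := by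
      rw [harmonic_succ]
      push_cast
      have : (0:ℝ) < ((m':ℝ) + 1)⁻¹ := by positivity
      linarith
    linarith

lemma sum_inv_nonneg (m : ℕ) {p : ℝ} (hp0 : 0 ≤ p) (hp1 : p < 1) :
    0 ≤ ∑ k ∈ Finset.Icc 1 m, 1 / ((k : ℝ) - p) := by
  refine Finset.sum_nonneg fun k hk => ?_
  have hk1 : (1 : ℝ) ≤ (k : ℝ) := by exact_mod_cast (Finset.mem_Icc.1 hk).1
  exact one_div_nonneg.2 (by linarith)

lemma integral_exp_mul_sin (a : ℝ) :
    ∫ p in (0:ℝ)..1, Real.exp (a * p) * Real.sin (π * p)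
      = π * (1 + Real.exp a) / (π ^ 2 + a ^ 2) := by
  have hd : ∀ x ∈ Set.uIcc (0:ℝ) 1, HasDerivAt
      (fun x => Real.exp (a * x) * (a * Real.sin (π * x) - π * Real.cos (π * x)) / (a ^ 2 + π ^ 2))
      (Real.exp (a * x) * Real.sin (π * x)) x := by
    intro x _
    have h1 : HasDerivAt (fun x => a * x) a x := by
      simpa using (hasDerivAt_id x).const_mul a
    have h2 : HasDerivAt (fun x => π * x) π x := by
      simpa using (hasDerivAt_id x).const_mul π
    have he : HasDerivAt (fun x => Real.exp (a * x)) (a * Real.exp (a * x)) x := by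
      simpa [mul_comm] using h1.exp
    have hs : HasDerivAt (fun x => Real.sin (π * x)) (π * Real.cos (π * x)) x := by
      simpa [mul_comm] using h2.sin
    have hc : HasDerivAt (fun x => Real.cos (π * x)) (-(π * Real.sin (π * x))) x := by
      simpa [mul_comm, neg_mul, mul_neg] using h2.cos
    have hin : HasDerivAt (fun x => a * Real.sin (π * x) - π * Real.cos (π * x))
        (a * (π * Real.cos (π * x)) - π * -(π * Real.sin (π * x))) x :=
      ((hs.const_mul a).sub (hc.const_mul π))
    have := (he.mul hin).div_const (a ^ 2 + π ^ 2)
    convert this using 1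
    have hpi : a ^ 2 + π ^ 2 ≠ 0 := by positivity
    · rfl
    · rfl
    · rfl
    rw [eq_div_iff (by positivity : a ^ 2 + π ^ 2 ≠ 0)]
    ring
  rw [intervalIntegral.integral_eq_sub_of_hasDerivAt hd]
  · simp [Real.sin_pi, Real.cos_pi, Real.sin_zero, Real.cos_zero]
    field_simp
    ring
  · apply Continuous.intervalIntegrable
    continuity

lemma be_inv_eq {x y p : ℝ} (hx : 0 < x) (hy : 0 < y) (hp0 : 0 < p) (hp1 : p < 1) (S : ℝ) :
    S / (Be x p * Be y (1 - p))
      = S * Gamma (x + p) * Gamma (y + (1 - p)) * Real.sin (π * p) / (π * Gamma x * Gamma y) := by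
  have hsin : 0 < Real.sin (π * p) := by
    apply Real.sin_pos_of_pos_of_lt_pi (by positivity)
    have := pi_pos
    nlinarith
  have hrefl : Gamma p * Gamma (1 - p) = π / Real.sin (π * p) := Real.Gamma_mul_Gamma_one_sub p
  have hGx := Gamma_pos_of_pos hx
  have hGy := Gamma_pos_of_pos hy
  have hGxp := Gamma_pos_of_pos (by linarith : 0 < x + p)
  have hGyp := Gamma_pos_of_pos (by linarith : 0 < y + (1 - p))
  have hGp := Gamma_pos_of_pos hp0
  have hG1p := Gamma_pos_of_pos (by linarith : 0 < 1 - p)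
  rw [Be, Be]
  rw [div_mul_div_comm]
  rw [show Gamma x * Gamma p * (Gamma y * Gamma (1 - p))
      = (Gamma p * Gamma (1 - p)) * (Gamma x * Gamma y) by ring, hrefl]
  have hπ := pi_pos
  field_simp

lemma key_decomp {nr x β S lg p : ℝ} (hx : 0 < x) (hβ : 1 < β) (hnr : 0 < nr) (hlg : lg ≠ 0) :
    nr / lg * (nr / (x * β * (β - 1))) *
      (S * Gamma (x + p) * Gamma ((β - 1) + (1 - p)) * Real.sin (π * p) /
        (π * Gamma x * Gamma (β - 1)))
    = S / lg * (Gamma (x + p) / (Gamma x * x ^ p))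
        * (Gamma ((β - 1) + (1 - p)) / (Gamma (β - 1) * (β - 1) ^ (1 - p)))
        * (nr / β * (x / nr) ^ (p - 1) * ((β - 1) / nr) ^ (-p))
        * (Real.sin (π * p) / π) := by
  have hπ := pi_pos
  have hy : (0:ℝ) < β - 1 := by linarith
  have hGx := Real.Gamma_pos_of_pos hx
  have hGy := Real.Gamma_pos_of_pos hy
  have hxp : (0:ℝ) < x ^ p := Real.rpow_pos_of_pos hx _
  have hyp : (0:ℝ) < (β - 1) ^ (1 - p) := Real.rpow_pos_of_pos hy _
  have hnrp : (0:ℝ) < nr ^ p := Real.rpow_pos_of_pos hnr _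
  have e1 : (x / nr) ^ (p - 1) = (x ^ p / x) / (nr ^ p / nr) := by
    rw [Real.div_rpow hx.le hnr.le, Real.rpow_sub hx, Real.rpow_sub hnr, Real.rpow_one,
      Real.rpow_one]
  have e2a : ((β - 1):ℝ) ^ (-p) = (β - 1) ^ (1 - p) / (β - 1) := by
    rw [show -p = (1 - p) - 1 by ring, Real.rpow_sub hy, Real.rpow_one]
  have e2b : nr ^ (-p) = (nr ^ p)⁻¹ := Real.rpow_neg hnr.le p
  have e2 : ((β - 1) / nr) ^ (-p) = ((β - 1) ^ (1 - p) / (β - 1)) / (nr ^ p)⁻¹ := by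
    rw [Real.div_rpow hy.le hnr.le, e2a, e2b]
  rw [e1, e2]
  field_simp

lemma core_bound {x y p S H : ℝ} (hx : 0 < x) (hy : 0 < y) (hp0 : 0 < p) (hp1 : p < 1)
    (hS : S ≤ 1 / (1 - p) + H) (hH : 0 ≤ H) :
    S * Gamma (x + p) * Gamma (y + (1 - p)) * Real.sin (π * p) / (π * Gamma x * Gamma y)
      ≤ (π + H) / π * (x ^ p * y ^ (1 - p)) := by
  have hπ := pi_pos
  have hGx := Gamma_pos_of_pos hx
  have hGy := Gamma_pos_of_pos hy
  have hGxp := Gamma_pos_of_pos (by linarith : 0 < x + p)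
  have hGyp := Gamma_pos_of_pos (by linarith : 0 < y + (1 - p))
  have hsin0 : 0 ≤ Real.sin (π * p) :=
    Real.sin_nonneg_of_nonneg_of_le_pi (by positivity) (by nlinarith)
  have hsin1 : Real.sin (π * p) ≤ π * (1 - p) := by
    rw [← Real.sin_pi_sub, show π - π * p = π * (1 - p) by ring]
    exact Real.sin_le (by nlinarith)
  have hsin2 : Real.sin (π * p) ≤ 1 := Real.sin_le_one _
  have hSsin : S * Real.sin (π * p) ≤ π + H := by
    have h1 : S * Real.sin (π * p) ≤ (1 / (1 - p) + H) * Real.sin (π * p) :=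
      mul_le_mul_of_nonneg_right hS hsin0
    have h2 : (1 / (1 - p)) * Real.sin (π * p) ≤ π := by
      have h1p : (0:ℝ) < 1 - p := by linarith
      rw [div_mul_eq_mul_div, one_mul, div_le_iff₀ h1p]
      nlinarith
    have h3 : H * Real.sin (π * p) ≤ H := by nlinarith
    nlinarith
  have hg1 : Gamma (x + p) ≤ Gamma x * x ^ p := gamma_ratio_upper hx hp0.le hp1.le
  have hg2 : Gamma (y + (1 - p)) ≤ Gamma y * y ^ (1 - p) :=
    gamma_ratio_upper hy (by linarith : (0:ℝ) ≤ 1 - p) (by linarith : (1:ℝ) - p ≤ 1)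
  have hxp : (0:ℝ) < x ^ p := rpow_pos_of_pos hx _
  have hyp : (0:ℝ) < y ^ (1 - p) := rpow_pos_of_pos hy _
  have hnum : S * Gamma (x + p) * Gamma (y + (1 - p)) * Real.sin (π * p)
      ≤ (π + H) * ((Gamma x * x ^ p) * (Gamma y * y ^ (1 - p))) := by
    have e : S * Gamma (x + p) * Gamma (y + (1 - p)) * Real.sin (π * p)
        = (S * Real.sin (π * p)) * (Gamma (x + p) * Gamma (y + (1 - p))) := by ring
    rw [e]
    have hb : Gamma (x + p) * Gamma (y + (1 - p)) ≤ (Gamma x * x ^ p) * (Gamma y * y ^ (1 - p)) :=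
      mul_le_mul hg1 hg2 hGyp.le (by positivity)
    exact mul_le_mul hSsin hb (by positivity) (by linarith)
  rw [div_le_iff₀ (by positivity : (0:ℝ) < π * Gamma x * Gamma y)]
  calc S * Gamma (x + p) * Gamma (y + (1 - p)) * Real.sin (π * p)
      ≤ (π + H) * ((Gamma x * x ^ p) * (Gamma y * y ^ (1 - p))) := hnum
    _ = (π + H) / π * (x ^ p * y ^ (1 - p)) * (π * Gamma x * Gamma y) := by
        field_simp

lemma contOn_gamma_comp {f : ℝ → ℝ} {s : Set ℝ} (hf : ContinuousOn f s)
    (hpos : ∀ q ∈ s, 0 < f q) : ContinuousOn (fun q => Real.Gamma (f q)) s := by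
  intro q hq
  have h := hpos q hq
  have hc : ContinuousAt Real.Gamma (f q) := by
    refine (Real.differentiableAt_Gamma fun m => ?_).continuousAt
    have hm : (0:ℝ) ≤ (m:ℝ) := Nat.cast_nonneg m
    intro hEq
    rw [hEq] at h
    linarith
  exact hc.comp_continuousWithinAt (hf q hq)

lemma Be_pos {x y : ℝ} (hx : 0 < x) (hy : 0 < y) : 0 < Be x y := by
  unfold Be
  have h1 := Real.Gamma_pos_of_pos hx
  have h2 := Real.Gamma_pos_of_pos hy
  have h3 := Real.Gamma_pos_of_pos (by linarith : 0 < x + y)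
  positivity

lemma g_continuousOn {x y : ℝ} (hx : 0 < x) (hy : 0 < y) (m : ℕ) (c : ℝ) :
    ContinuousOn (fun q => c * ((∑ k ∈ Finset.Icc 1 m, 1 / ((k:ℝ) - q)) /
      (Be x q * Be y (1 - q)))) (Ioo (0:ℝ) 1) := by
  apply ContinuousOn.mul continuousOn_const
  apply ContinuousOn.div
  · apply continuousOn_finset_sum
    intro k hk
    have hk1 : (1:ℝ) ≤ (k:ℝ) := by exact_mod_cast (Finset.mem_Icc.1 hk).1
    apply ContinuousOn.div continuousOn_const
    · exact (continuous_const.sub continuous_id).continuousOn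
    · intro q hq hEq
      have : (k:ℝ) = q := sub_eq_zero.1 hEq
      linarith [hq.2]
  · apply ContinuousOn.mul
    · -- Be x q
      unfold Be
      apply ContinuousOn.div
      · exact continuousOn_const.mul (contOn_gamma_comp continuousOn_id fun q hq => hq.1)
      · exact contOn_gamma_comp (continuous_const.add continuous_id).continuousOn
          fun q hq => by linarith [hq.1]
      · intro q hq
        exact (Real.Gamma_pos_of_pos (by linarith [hq.1] : 0 < x + q)).ne'
    · -- Be y (1 - q)
      unfold Be
      apply ContinuousOn.div
      · exact continuousOn_const.mul (contOn_gamma_comp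
          (continuous_const.sub continuous_id).continuousOn fun q hq => by linarith [hq.2])
      · exact contOn_gamma_comp (continuous_const.add
          (continuous_const.sub continuous_id)).continuousOn
          fun q hq => by show (0:ℝ) < y + (1 - q); linarith [hq.2]
      · intro q hq
        exact (Real.Gamma_pos_of_pos (by linarith [hq.2] : 0 < y + (1 - q))).ne'
  · intro q hq
    have h1 : 0 < Be x q := Be_pos hx hq.1
    have h2 : 0 < Be y (1 - q) := Be_pos hy (by linarith [hq.2])
    positivity

end aux

set_option maxHeartbeats 2000000 in
/-- If `n/2 < b_n < n` and `b_n/n → u ∈ [1/2,1)` then, with `α = log(1-u) - log u`,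
`(n/log n) F_{n,b_n}(0) → G(α)/(u(1-u))`. -/
theorem stmt17 (u : ℝ) (hu : u ∈ Set.Ico (1 / 2 : ℝ) 1) (b : ℕ → ℕ)
    (hb : ∀ᶠ n : ℕ in Filter.atTop, n < 2 * b n ∧ b n < n)
    (hlim : Filter.Tendsto (fun n : ℕ => (b n : ℝ) / (n : ℝ)) Filter.atTop (nhds u)) :
    Filter.Tendsto (fun n : ℕ => ((n : ℝ) / Real.log n) * F n (b n) 0)
      Filter.atTop (nhds (G (Real.log (1 - u) - Real.log u) / (u * (1 - u)))) := by
  obtain ⟨hu1, hu2⟩ := hu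
  have h0u : 0 < u := lt_of_lt_of_le (by norm_num) hu1
  have h1u : 0 < 1 - u := by linarith
  have hπ := pi_pos
  set α := Real.log (1 - u) - Real.log u with hα
  set L : ℝ → ℝ := fun p => (1 - u) ^ (p - 1) * u ^ (-p - 1) * (Real.sin (π * p) / π)
    with hLdef
  -- target as an integral
  have htarget : ∫ p in Ioo (0:ℝ) 1, L p = G α / (u * (1 - u)) := by
    have hL : ∀ p : ℝ, L p = (π * (u * (1 - u)))⁻¹ * (Real.exp (α * p) * Real.sin (π * p)) := by
      intro p
      rw [hLdef]
      simp only
      rw [Real.rpow_def_of_pos h1u, Real.rpow_def_of_pos h0u]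
      have he : Real.exp (Real.log (1 - u) * (p - 1)) * Real.exp (Real.log u * (-p - 1))
          = (Real.exp (Real.log (1 - u) + Real.log u))⁻¹ * Real.exp (α * p) := by
        rw [← Real.exp_add, ← Real.exp_neg, ← Real.exp_add]
        congr 1
        rw [hα]; ring
      rw [he, Real.exp_add, Real.exp_log h1u, Real.exp_log h0u]
      have hne : ((1 - u) * u) ≠ 0 := by positivity
      field_simp
      try exact Or.inl trivial
    rw [← MeasureTheory.integral_Ioc_eq_integral_Ioo, ← intervalIntegral.integral_of_le zero_le_one]
    simp only [hL]
    rw [intervalIntegral.integral_const_mul, integral_exp_mul_sin, G]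
    have h1 : π ^ 2 + α ^ 2 ≠ 0 := by positivity
    field_simp
  -- the rescaled integrand
  set g : ℕ → ℝ → ℝ := fun n q =>
    (↑n / Real.log ↑n * (↑n / ((↑n - ↑(b n)) * ↑(b n) * (↑(b n) - 1)))) *
      ((∑ k ∈ Finset.Icc 1 (b n - 1), 1 / ((k : ℝ) - q)) /
        (Be (↑n - ↑(b n)) q * Be (↑(b n) - 1) (1 - q))) with hgdef
  have hFeq : ∀ n : ℕ, ((n:ℝ)/Real.log n) * F n (b n) 0 = ∫ q in Ioo (0:ℝ) 1, g n q := by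
    intro n
    rw [F]
    simp only [neg_zero, Real.exp_zero, one_mul]
    rw [← mul_assoc, ← intervalIntegral.integral_const_mul,
      intervalIntegral.integral_of_le zero_le_one, MeasureTheory.integral_Ioc_eq_integral_Ioo]
  rw [← htarget]
  refine Filter.Tendsto.congr' (Filter.Eventually.of_forall fun n => (hFeq n).symm) ?_
  -- eventual good facts
  have hbig : ∀ᶠ n : ℕ in atTop, n < 2 * b n ∧ b n < n ∧ (b n : ℝ)/(n:ℝ) ≤ (1+u)/2 ∧
      (1:ℝ) ≤ Real.log n ∧ (4:ℝ) ≤ (n:ℝ) := by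
    filter_upwards [hb, hlim.eventually (eventually_le_nhds (by linarith : u < (1+u)/2)),
      (Real.tendsto_log_atTop.comp tendsto_natCast_atTop_atTop).eventually_ge_atTop 1,
      tendsto_natCast_atTop_atTop.eventually_ge_atTop (4:ℝ)] with n h1 h2 h3 h4
    exact ⟨h1.1, h1.2, h2, h3, h4⟩
  -- dominated convergence
  set C : ℝ := 16 * (π + 2) / (π * ((1-u)/2)) with hC
  apply MeasureTheory.tendsto_integral_filter_of_dominated_convergence (bound := fun _ => C)
  · -- measurability
    filter_upwards [hbig] with n hn
    have hx : (0:ℝ) < (n:ℝ) - b n := by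
      have : (b n : ℝ) < (n:ℝ) := by exact_mod_cast hn.2.1
      linarith
    have hy : (0:ℝ) < (b n : ℝ) - 1 := by
      have h2b : (n:ℝ) < 2 * (b n : ℝ) := by exact_mod_cast hn.1
      linarith [hn.2.2.2.2]
    exact ((g_continuousOn hx hy (b n - 1) _).aestronglyMeasurable measurableSet_Ioo)
  · -- uniform bound
    filter_upwards [hbig] with n hn
    refine (MeasureTheory.ae_restrict_iff' measurableSet_Ioo).2
      (Filter.Eventually.of_forall fun p hp => ?_)
    obtain ⟨hp0, hp1⟩ := hp
    have hβ2 : (n:ℝ) < 2*(b n:ℝ) := by exact_mod_cast hn.1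
    have hβn : (b n:ℝ) < (n:ℝ) := by exact_mod_cast hn.2.1
    have hbn : (b n:ℝ)/(n:ℝ) ≤ (1+u)/2 := hn.2.2.1
    have hlg : 1 ≤ Real.log n := hn.2.2.2.1
    have hn4 : (4:ℝ) ≤ (n:ℝ) := hn.2.2.2.2
    have hnr : (0:ℝ) < (n:ℝ) := by linarith
    have hx : (0:ℝ) < (n:ℝ) - b n := by linarith
    have hβu : (b n:ℝ) ≤ (1+u)/2 * n := by
      rw [div_le_iff₀ hnr] at hbn
      linarith
    have hxl : (1-u)/2 * n ≤ (n:ℝ) - b n := by nlinarith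
    have hβl : (n:ℝ)/4 ≤ (b n:ℝ) := by linarith
    have hyl : (n:ℝ)/4 ≤ (b n:ℝ) - 1 := by linarith
    have hy : (0:ℝ) < (b n:ℝ) - 1 := by linarith
    have hxu : (n:ℝ) - b n ≤ (n:ℝ) := by linarith
    have hyu : (b n:ℝ) - 1 ≤ (n:ℝ) := by linarith
    have hGx := Real.Gamma_pos_of_pos hx
    have hGy := Real.Gamma_pos_of_pos hy
    have hGxp := Real.Gamma_pos_of_pos (by linarith : (0:ℝ) < ((n:ℝ) - b n) + p)
    have hGyp := Real.Gamma_pos_of_pos (by linarith : (0:ℝ) < ((b n:ℝ) - 1) + (1 - p))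
    have hsin0 : 0 ≤ Real.sin (π * p) :=
      Real.sin_nonneg_of_nonneg_of_le_pi (by positivity) (by nlinarith)
    have hS0 : 0 ≤ ∑ k ∈ Finset.Icc 1 (b n - 1), 1/((k:ℝ) - p) :=
      sum_inv_nonneg _ hp0.le hp1
    have hcst0 : (0:ℝ) ≤ ↑n / Real.log ↑n * (↑n / ((↑n - ↑(b n)) * ↑(b n) * (↑(b n) - 1))) := by
      apply mul_nonneg (div_nonneg hnr.le (by linarith))
      apply div_nonneg hnr.le
      have : (0:ℝ) < ((n:ℝ) - b n) * (b n) * ((b n:ℝ) - 1) := by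
        apply mul_pos (mul_pos hx (by linarith)) hy
      linarith
    rw [hgdef]
    simp only
    rw [be_inv_eq hx hy hp0 hp1]
    -- nonnegativity
    have hval0 : (0:ℝ) ≤ (↑n / Real.log ↑n * (↑n / ((↑n - ↑(b n)) * ↑(b n) * (↑(b n) - 1)))) *
        ((∑ k ∈ Finset.Icc 1 (b n - 1), 1/((k:ℝ) - p)) * Gamma (((n:ℝ) - b n) + p) *
          Gamma (((b n:ℝ) - 1) + (1 - p)) * Real.sin (π * p) /
          (π * Gamma ((n:ℝ) - b n) * Gamma ((b n:ℝ) - 1))) := by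
      apply mul_nonneg hcst0
      apply div_nonneg
      · exact mul_nonneg (mul_nonneg (mul_nonneg hS0 hGxp.le) hGyp.le) hsin0
      · exact (mul_pos (mul_pos pi_pos hGx) hGy).le
    rw [Real.norm_eq_abs, abs_of_nonneg hval0]
    -- key bound on S
    have hHm : (harmonic (b n - 1) : ℝ) ≤ 1 + Real.log n := by
      refine (harmonic_le_one_add_log _).trans ?_
      have h1 : ((b n - 1 : ℕ):ℝ) ≤ (n:ℝ) := by
        have : b n - 1 ≤ n := by omega
        exact_mod_cast this
      have h2 : Real.log ((b n - 1 : ℕ):ℝ) ≤ Real.log n := by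
        rcases Nat.eq_zero_or_pos (b n - 1) with h | h
        · rw [h]; simp
          linarith
        · exact Real.log_le_log (by exact_mod_cast h) h1
      linarith
    have hH : (∑ k ∈ Finset.Icc 1 (b n - 1), 1/((k:ℝ) - p)) ≤ 1/(1-p) + (1 + Real.log n) := by
      have := sum_inv_upper (b n - 1) hp0.le hp1
      linarith
    have hcore := core_bound hx hy hp0 hp1 hH (by linarith : (0:ℝ) ≤ 1 + Real.log n)
    have step1 := mul_le_mul_of_nonneg_left hcore hcst0
    refine step1.trans ?_
    -- numeric estimates
    have hxyp : ((n:ℝ) - b n) ^ p * ((b n:ℝ) - 1) ^ (1-p) ≤ (n:ℝ) := by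
      have h1 : ((n:ℝ) - b n) ^ p ≤ (n:ℝ) ^ p := Real.rpow_le_rpow hx.le hxu hp0.le
      have h2 : ((b n:ℝ) - 1) ^ (1-p) ≤ (n:ℝ) ^ (1-p) :=
        Real.rpow_le_rpow hy.le hyu (by linarith)
      have h3 : (n:ℝ) ^ p * (n:ℝ) ^ (1-p) = (n:ℝ) := by
        rw [← Real.rpow_add hnr]; simp
      calc ((n:ℝ) - b n) ^ p * ((b n:ℝ) - 1) ^ (1-p)
          ≤ (n:ℝ) ^ p * (n:ℝ) ^ (1-p) :=
            mul_le_mul h1 h2 (Real.rpow_pos_of_pos hy _).le (Real.rpow_pos_of_pos hnr _).le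
        _ = (n:ℝ) := h3
    have hpiH : π + (1 + Real.log n) ≤ (π + 2) * Real.log n := by nlinarith [pi_pos]
    have step2 : (↑n / Real.log ↑n * (↑n / ((↑n - ↑(b n)) * ↑(b n) * (↑(b n) - 1)))) *
        ((π + (1 + Real.log n)) / π * (((n:ℝ) - b n) ^ p * ((b n:ℝ) - 1) ^ (1-p)))
        ≤ (↑n / Real.log ↑n * (↑n / ((↑n - ↑(b n)) * ↑(b n) * (↑(b n) - 1)))) *
          ((π + 2) * Real.log n / π * (n:ℝ)) := by
      apply mul_le_mul_of_nonneg_left ?_ hcst0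
      apply mul_le_mul (div_le_div_of_nonneg_right hpiH pi_pos.le) hxyp
        (mul_nonneg (Real.rpow_pos_of_pos hx _).le (Real.rpow_pos_of_pos hy _).le)
      positivity
    refine step2.trans ?_
    have hlg0 : Real.log (n:ℝ) ≠ 0 := by linarith
    have hx0 : ((n:ℝ) - b n) ≠ 0 := hx.ne'
    have hb0 : ((b n:ℝ)) ≠ 0 := by linarith
    have hy0 : ((b n:ℝ) - 1) ≠ 0 := hy.ne'
    have heq : (↑n / Real.log ↑n * (↑n / ((↑n - ↑(b n)) * ↑(b n) * (↑(b n) - 1)))) *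
        ((π + 2) * Real.log n / π * (n:ℝ))
        = (π + 2) * (n:ℝ) * (n:ℝ) * (n:ℝ) / (π * (((n:ℝ) - b n) * ↑(b n) * ((b n:ℝ) - 1))) := by
      rw [eq_div_iff (mul_pos pi_pos (mul_pos (mul_pos hx
        (by linarith : (0:ℝ) < (b n:ℝ))) hy)).ne']
      field_simp
    rw [heq, hC]
    rw [div_le_div_iff₀ (mul_pos pi_pos (mul_pos (mul_pos hx (by linarith)) hy))
      (mul_pos pi_pos (by linarith : (0:ℝ) < (1-u)/2))]
    have hprod : (1-u)/2 * n * ((n:ℝ)/4) * ((n:ℝ)/4) ≤ ((n:ℝ) - b n) * ↑(b n) * ((b n:ℝ) - 1) := by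
      have h1 : (1-u)/2 * n * ((n:ℝ)/4) ≤ ((n:ℝ) - b n) * ↑(b n) :=
        mul_le_mul hxl hβl (by positivity) hx.le
      exact mul_le_mul h1 hyl (by positivity) (mul_nonneg hx.le (by linarith))
    nlinarith [pi_pos, mul_pos (mul_pos hx (by linarith : (0:ℝ) < (b n:ℝ))) hy,
      mul_le_mul_of_nonneg_left hprod (by positivity : (0:ℝ) ≤ 16 * (π+2) * π)]
  · exact integrable_const C
  · -- pointwise limit
    refine (MeasureTheory.ae_restrict_iff' measurableSet_Ioo).2
      (Filter.Eventually.of_forall fun p hp => ?_)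
    obtain ⟨hp0, hp1⟩ := hp
    have tn : Tendsto (fun n : ℕ => (n:ℝ)) atTop atTop := tendsto_natCast_atTop_atTop
    have tlog : Tendsto (fun n : ℕ => Real.log n) atTop atTop :=
      Real.tendsto_log_atTop.comp tn
    -- x_n / n → 1 - u
    have txn : Tendsto (fun n : ℕ => ((n:ℝ) - b n)/(n:ℝ)) atTop (nhds (1 - u)) := by
      have h := (tendsto_const_nhds (x := (1:ℝ))).sub hlim
      apply h.congr'
      filter_upwards [tn.eventually_ge_atTop 1] with n hn
      have hne : (n:ℝ) ≠ 0 := by linarith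
      field_simp
    -- y_n / n → u
    have tyn : Tendsto (fun n : ℕ => ((b n:ℝ) - 1)/(n:ℝ)) atTop (nhds u) := by
      have h2 : Tendsto (fun n : ℕ => (1:ℝ)/(n:ℝ)) atTop (nhds 0) :=
        tendsto_one_div_atTop_nhds_zero_nat
      have h := hlim.sub h2
      rw [sub_zero] at h
      exact h.congr (fun n => (sub_div _ _ _).symm)
    -- x_n → ∞
    have txtop : Tendsto (fun n : ℕ => (n:ℝ) - b n) atTop atTop := by
      have h := Filter.Tendsto.pos_mul_atTop h1u txn tn
      apply h.congr'
      filter_upwards [tn.eventually_ge_atTop 1] with n hn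
      have hne : (n:ℝ) ≠ 0 := by linarith
      field_simp
    -- y_n → ∞
    have tytop : Tendsto (fun n : ℕ => (b n:ℝ) - 1) atTop atTop := by
      have h := Filter.Tendsto.pos_mul_atTop h0u tyn tn
      apply h.congr'
      filter_upwards [tn.eventually_ge_atTop 1] with n hn
      have hne : (n:ℝ) ≠ 0 := by linarith
      field_simp
    -- (b n - 1 : ℕ) → ∞
    have tmtop : Tendsto (fun n => b n - 1) atTop atTop := by
      rw [Filter.tendsto_atTop]
      intro N
      filter_upwards [hb, Filter.eventually_ge_atTop (2*N + 4)] with n h1 h2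
      omega
    -- S / log n → 1
    have hSlim : Tendsto (fun n => (∑ k ∈ Finset.Icc 1 (b n - 1), 1/((k:ℝ)-p)) / Real.log n)
        atTop (nhds 1) := by
      have hγ := Real.tendsto_harmonic_sub_log.comp tmtop
      have hmn : Tendsto (fun n => ((b n - 1 : ℕ):ℝ)/(n:ℝ)) atTop (nhds u) := by
        apply tyn.congr'
        filter_upwards [hb] with n hn
        have h1 : 1 ≤ b n := by omega
        rw [Nat.cast_sub h1, Nat.cast_one]
      have hlogm : Tendsto (fun n => Real.log ((b n - 1 : ℕ):ℝ) - Real.log n) atTop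
          (nhds (Real.log u)) := by
        have hcont := (Real.continuousAt_log h0u.ne').tendsto.comp hmn
        apply hcont.congr'
        filter_upwards [tmtop.eventually_ge_atTop 1, tn.eventually_ge_atTop 1] with n h1 h2
        have hm0 : ((b n - 1 : ℕ):ℝ) ≠ 0 := by
          have : (1:ℝ) ≤ ((b n - 1 : ℕ):ℝ) := by exact_mod_cast h1
          linarith
        have hn0 : (n:ℝ) ≠ 0 := by linarith
        rw [Function.comp_apply, Real.log_div hm0 hn0]
      have hgap : Tendsto (fun n => (harmonic (b n - 1):ℝ) - Real.log n) atTop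
          (nhds (Real.eulerMascheroniConstant + Real.log u)) := by
        have h := hγ.add hlogm
        apply h.congr (fun n => by simp only [Function.comp_apply]; ring)
      have hharm : Tendsto (fun n => (harmonic (b n - 1):ℝ)/Real.log n) atTop (nhds 1) := by
        have h0 := hgap.div_atTop tlog
        have h1 := h0.add (tendsto_const_nhds (x := (1:ℝ)))
        rw [zero_add] at h1
        apply h1.congr'
        filter_upwards [tlog.eventually_ge_atTop 1] with n hn
        have : Real.log n ≠ 0 := by linarith
        field_simp
        ring
      have hupper : Tendsto (fun n => (1/(1-p) + (harmonic (b n - 1):ℝ))/Real.log n) atTop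
          (nhds 1) := by
        have h := (tendsto_const_nhds (x := 1/(1-p)).div_atTop tlog).add hharm
        rw [zero_add] at h
        exact h.congr (fun n => (add_div _ _ _).symm)
      refine tendsto_of_tendsto_of_tendsto_of_le_of_le' hharm hupper ?_ ?_
      · filter_upwards [tlog.eventually_gt_atTop 0] with n hn
        exact div_le_div_of_nonneg_right (sum_inv_lower _ hp0.le hp1) hn.le
      · filter_upwards [tlog.eventually_gt_atTop 0] with n hn
        exact div_le_div_of_nonneg_right (sum_inv_upper _ hp0.le hp1) hn.le
    -- Gamma ratio limits
    have hrat : ∀ (z : ℕ → ℝ) (q : ℝ), 0 ≤ q → q ≤ 1 → Tendsto z atTop atTop →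
        Tendsto (fun n => Gamma (z n + q) / (Gamma (z n) * z n ^ q)) atTop (nhds 1) := by
      intro z q hq0 hq1 hz
      have hlow : Tendsto (fun n => (z n/(z n + q)) ^ ((1:ℝ)-q)) atTop (nhds 1) := by
        have hbse : Tendsto (fun n => z n/(z n + q)) atTop (nhds 1) := by
          have h1 : Tendsto (fun n => q/(z n + q)) atTop (nhds 0) :=
            tendsto_const_nhds.div_atTop (tendsto_atTop_add_const_right _ q hz)
          have h2 := (tendsto_const_nhds (x := (1:ℝ))).sub h1
          rw [sub_zero] at h2
          apply h2.congr'
          filter_upwards [hz.eventually_gt_atTop 0] with n hn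
          have : z n + q ≠ 0 := by linarith
          field_simp
          ring
        have hc := (Real.continuousAt_rpow_const 1 (1-q) (Or.inl one_ne_zero)).tendsto.comp hbse
        simpa [Function.comp_def] using hc
      refine tendsto_of_tendsto_of_tendsto_of_le_of_le' hlow tendsto_const_nhds ?_ ?_
      · filter_upwards [hz.eventually_gt_atTop 0] with n hn
        exact ratio_lb hn hq0 hq1
      · filter_upwards [hz.eventually_gt_atTop 0] with n hn
        exact ratio_ub hn hq0 hq1
    -- the elementary factor
    have hK : Tendsto (fun n : ℕ => (n:ℝ)/(b n) * (((n:ℝ) - b n)/(n:ℝ)) ^ (p-1)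
        * (((b n:ℝ) - 1)/(n:ℝ)) ^ (-p)) atTop
        (nhds (u⁻¹ * (1-u) ^ (p-1) * u ^ (-p))) := by
      have hinv : Tendsto (fun n : ℕ => (n:ℝ)/(b n)) atTop (nhds u⁻¹) := by
        have h := hlim.inv₀ h0u.ne'
        apply h.congr (fun n => ?_)
        rw [inv_div]
      have h2 := (Real.continuousAt_rpow_const (1-u) (p-1) (Or.inl h1u.ne')).tendsto.comp txn
      have h3 := (Real.continuousAt_rpow_const u (-p) (Or.inl h0u.ne')).tendsto.comp tyn
      exact (hinv.mul h2).mul h3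
    -- assemble the product
    have hT : Tendsto (fun n : ℕ =>
        (∑ k ∈ Finset.Icc 1 (b n - 1), 1/((k:ℝ)-p)) / Real.log n
        * (Gamma (((n:ℝ) - b n) + p) / (Gamma ((n:ℝ) - b n) * ((n:ℝ) - b n) ^ p))
        * (Gamma (((b n:ℝ) - 1) + (1 - p)) / (Gamma ((b n:ℝ) - 1) * ((b n:ℝ) - 1) ^ (1 - p)))
        * ((n:ℝ)/(b n) * (((n:ℝ) - b n)/(n:ℝ)) ^ (p-1) * (((b n:ℝ) - 1)/(n:ℝ)) ^ (-p))
        * (Real.sin (π * p) / π)) atTop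
        (nhds (1 * 1 * 1 * (u⁻¹ * (1-u) ^ (p-1) * u ^ (-p)) * (Real.sin (π * p) / π))) :=
      (((hSlim.mul (hrat (fun n => (n:ℝ) - b n) p hp0.le hp1.le txtop)).mul
        (hrat (fun n => (b n:ℝ) - 1) (1-p) (by linarith) (by linarith) tytop)).mul hK).mul
        tendsto_const_nhds
    have hLv : L p = 1 * 1 * 1 * (u⁻¹ * (1-u) ^ (p-1) * u ^ (-p)) * (Real.sin (π * p) / π) := by
      rw [hLdef]
      simp only
      rw [show (-p - 1 : ℝ) = -p + -1 by ring, Real.rpow_add h0u, Real.rpow_neg_one]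
      ring
    rw [hLv]
    refine Filter.Tendsto.congr' ?_ hT
    filter_upwards [hbig] with n hn
    have hxpos : (0:ℝ) < (n:ℝ) - b n := by
      have hlt : (b n : ℝ) < (n:ℝ) := by exact_mod_cast hn.2.1
      linarith
    have hβ1 : (1:ℝ) < (b n : ℝ) := by
      have h2b : (n:ℝ) < 2 * (b n : ℝ) := by exact_mod_cast hn.1
      linarith [hn.2.2.2.2]
    have hnr : (0:ℝ) < (n:ℝ) := by linarith [hn.2.2.2.2]
    have hlg : Real.log (n:ℝ) ≠ 0 := by linarith [hn.2.2.2.1]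
    rw [hgdef]
    simp only
    rw [be_inv_eq hxpos (by linarith : (0:ℝ) < (b n:ℝ) - 1) hp0 hp1]
    exact (key_decomp hxpos hβ1 hnr hlg).symm
end

section
/- For every real number x, lim_{n→∞} 1/((n-1)·Be(n-1, 1-e^{-(log log n + x)})) = exp(-e^{-x}). -/
open Real

private lemma gamma_upper {a t : ℝ} (ha : 0 < a) (ht0 : 0 ≤ t) (ht1 : t ≤ 1) :
    Real.Gamma (a + t) ≤ Real.Gamma a * Real.exp (t * Real.log a) := by
  have hGa := Real.Gamma_pos_of_pos ha
  have hGat := Real.Gamma_pos_of_pos (by linarith : (0:ℝ) < a + t)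
  have hGa1 := Real.Gamma_pos_of_pos (by linarith : (0:ℝ) < a + 1)
  have h := Real.convexOn_log_Gamma.2 (Set.mem_Ioi.mpr ha)
      (Set.mem_Ioi.mpr (by linarith : (0:ℝ) < a + 1))
      (by linarith : (0:ℝ) ≤ 1 - t) ht0 (by ring)
  simp only [Function.comp_apply, smul_eq_mul] at h
  have hc : (1 - t) * a + t * (a + 1) = a + t := by ring
  rw [hc, Real.Gamma_add_one ha.ne', Real.log_mul ha.ne' hGa.ne'] at h
  have h2 : Real.log (Real.Gamma (a + t)) ≤ Real.log (Real.Gamma a) + t * Real.log a := by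
    nlinarith [h]
  calc Real.Gamma (a + t) = Real.exp (Real.log (Real.Gamma (a + t))) := (Real.exp_log hGat).symm
    _ ≤ Real.exp (Real.log (Real.Gamma a) + t * Real.log a) := Real.exp_le_exp.mpr h2
    _ = Real.Gamma a * Real.exp (t * Real.log a) := by
        rw [Real.exp_add, Real.exp_log hGa]

private lemma gamma_lower {a t : ℝ} (ha : 0 < a) (ht0 : 0 ≤ t) (ht1 : t ≤ 1) :
    a * Real.Gamma a * Real.exp ((t - 1) * Real.log (a + t)) ≤ Real.Gamma (a + t) := by
  have hat : (0:ℝ) < a + t := by linarith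
  have hGa := Real.Gamma_pos_of_pos ha
  have hGat := Real.Gamma_pos_of_pos hat
  have h := Real.convexOn_log_Gamma.2 (Set.mem_Ioi.mpr hat)
      (Set.mem_Ioi.mpr (by linarith : (0:ℝ) < a + t + 1))
      ht0 (by linarith : (0:ℝ) ≤ 1 - t) (by ring)
  simp only [Function.comp_apply, smul_eq_mul] at h
  have hc : t * (a + t) + (1 - t) * (a + t + 1) = a + 1 := by ring
  rw [hc, Real.Gamma_add_one ha.ne', Real.Gamma_add_one hat.ne',
    Real.log_mul ha.ne' hGa.ne', Real.log_mul hat.ne' hGat.ne'] at h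
  have h2 : Real.log a + Real.log (Real.Gamma a) + (1 - t) * Real.log (a + t)
      ≤ Real.log (Real.Gamma (a + t)) + (1 - t) * Real.log (a + t)
        + (1 - t) * Real.log (a + t) := by nlinarith [h]
  have h3 : Real.log a + Real.log (Real.Gamma a) + (t - 1) * Real.log (a + t)
      ≤ Real.log (Real.Gamma (a + t)) := by nlinarith [h]
  calc a * Real.Gamma a * Real.exp ((t - 1) * Real.log (a + t))
      = Real.exp (Real.log a + Real.log (Real.Gamma a) + (t - 1) * Real.log (a + t)) := by
        rw [Real.exp_add, Real.exp_add, Real.exp_log ha, Real.exp_log hGa]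
    _ ≤ Real.exp (Real.log (Real.Gamma (a + t))) := Real.exp_le_exp.mpr h3
    _ = Real.Gamma (a + t) := Real.exp_log hGat

/-- For every real `x`,
`1/((n-1) Be(n-1, 1-e^{-(log log n + x)})) → exp(-e^{-x})` as `n → ∞`;
i.e. the absorption time of the Bolthausen–Sznitman coalescent, centered by
`log log n`, converges to a standard Gumbel law. -/
theorem stmt19 (x : ℝ) :
    Filter.Tendsto (fun n : ℕ =>
        1 / (((n : ℝ) - 1) *
          Be ((n : ℝ) - 1) (1 - Real.exp (-(Real.log (Real.log n) + x)))))
      Filter.atTop (nhds (Real.exp (-Real.exp (-x)))) := by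
  set ε : ℕ → ℝ := fun n => Real.exp (-(Real.log (Real.log n) + x)) with hεdef
  set t : ℕ → ℝ := fun n => 1 - ε n with htdef
  set a : ℕ → ℝ := fun n => (n : ℝ) - 1 with hadef
  have hεpos : ∀ n, 0 < ε n := fun n => Real.exp_pos _
  -- log log n + x → ∞
  have hx : Filter.Tendsto (fun n : ℕ => Real.log (Real.log n) + x) Filter.atTop Filter.atTop :=
    Filter.tendsto_atTop_add_const_right _ x
      (Real.tendsto_log_atTop.comp (Real.tendsto_log_atTop.comp tendsto_natCast_atTop_atTop))
  have hε0 : Filter.Tendsto ε Filter.atTop (nhds 0) :=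
    Real.tendsto_exp_atBot.comp (Filter.tendsto_neg_atBot_iff.mpr hx)
  have hεlt1 : ∀ᶠ n : ℕ in Filter.atTop, ε n < 1 :=
    hε0.eventually_lt_const (by norm_num)
  -- basic facts for large n
  have hεeq : ∀ n : ℕ, 3 ≤ n → ε n = Real.exp (-x) / Real.log n := by
    intro n hn
    have h1n : (1:ℝ) < (n:ℝ) := by exact_mod_cast Nat.lt_of_lt_of_le (by norm_num) hn
    have hlogn : 0 < Real.log n := Real.log_pos h1n
    simp only [hεdef]
    rw [neg_add, Real.exp_add, Real.exp_neg, Real.exp_log hlogn]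
    ring
  have hloginv : Filter.Tendsto (fun n : ℕ => (Real.log n)⁻¹) Filter.atTop (nhds 0) :=
    (Real.tendsto_log_atTop.comp tendsto_natCast_atTop_atTop).inv_tendsto_atTop
  -- log(n-1)/log n → 1
  have hr : Filter.Tendsto (fun n : ℕ => Real.log ((n:ℝ) - 1) * (Real.log n)⁻¹)
      Filter.atTop (nhds 1) := by
    have hlog1 : Filter.Tendsto (fun n : ℕ => Real.log (1 - 1 / (n:ℝ))) Filter.atTop (nhds 0) := by
      have h1 : Filter.Tendsto (fun n : ℕ => 1 - 1 / (n:ℝ)) Filter.atTop (nhds 1) := by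
        simpa using tendsto_const_nhds.sub (tendsto_one_div_atTop_nhds_zero_nat :
          Filter.Tendsto (fun n : ℕ => 1 / (n:ℝ)) Filter.atTop (nhds 0))
      have := ((Real.continuousAt_log (by norm_num : (1:ℝ) ≠ 0)).tendsto).comp h1
      simpa [Function.comp_def] using this
    have hmain : Filter.Tendsto (fun n : ℕ => 1 + Real.log (1 - 1 / (n:ℝ)) * (Real.log n)⁻¹)
        Filter.atTop (nhds 1) := by
      simpa using tendsto_const_nhds.add (hlog1.mul hloginv)
    refine hmain.congr' ?_
    filter_upwards [Filter.eventually_ge_atTop 3] with n hn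
    have h1n : (1:ℝ) < (n:ℝ) := by exact_mod_cast Nat.lt_of_lt_of_le (by norm_num) hn
    have hn0 : (0:ℝ) < (n:ℝ) := by linarith
    have hlogn : 0 < Real.log n := Real.log_pos h1n
    have hfrac : (0:ℝ) < 1 - 1 / (n:ℝ) := by
      rw [sub_pos, div_lt_one hn0]; exact h1n
    have heq : (n:ℝ) - 1 = (n:ℝ) * (1 - 1 / (n:ℝ)) := by field_simp
    rw [heq, Real.log_mul hn0.ne' hfrac.ne', add_mul, mul_inv_cancel₀ hlogn.ne']
  -- ε n * log (a n) → exp (-x)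
  have h1 : Filter.Tendsto (fun n : ℕ => ε n * Real.log (a n)) Filter.atTop
      (nhds (Real.exp (-x))) := by
    have hmain : Filter.Tendsto
        (fun n : ℕ => Real.exp (-x) * (Real.log ((n:ℝ) - 1) * (Real.log n)⁻¹))
        Filter.atTop (nhds (Real.exp (-x))) := by
      simpa using tendsto_const_nhds.mul hr
    refine hmain.congr' ?_
    filter_upwards [Filter.eventually_ge_atTop 3] with n hn
    rw [hεeq n hn]; simp only [hadef]; ring
  -- ε n * log (a n + t n) → exp (-x)
  have h2 : Filter.Tendsto (fun n : ℕ => ε n * Real.log (a n + t n)) Filter.atTop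
      (nhds (Real.exp (-x))) := by
    refine tendsto_of_tendsto_of_tendsto_of_le_of_le' h1 tendsto_const_nhds ?_ ?_
    · filter_upwards [Filter.eventually_ge_atTop 3, hεlt1] with n hn hε1
      have h1n : (1:ℝ) < (n:ℝ) := by exact_mod_cast Nat.lt_of_lt_of_le (by norm_num) hn
      have hta : 0 < t n := by simp only [htdef]; linarith [hεpos n]
      have ha0 : 0 < a n := by simp only [hadef]; linarith
      exact mul_le_mul_of_nonneg_left
        (Real.log_le_log ha0 (by linarith)) (hεpos n).le
    · filter_upwards [Filter.eventually_ge_atTop 3, hεlt1] with n hn hε1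
      have h1n : (1:ℝ) < (n:ℝ) := by exact_mod_cast Nat.lt_of_lt_of_le (by norm_num) hn
      have hlogn : 0 < Real.log n := Real.log_pos h1n
      have hant : a n + t n ≤ (n:ℝ) := by
        simp only [hadef, htdef]; linarith [hεpos n]
      have hant0 : 0 < a n + t n := by
        simp only [hadef, htdef]; linarith
      have hle : Real.log (a n + t n) ≤ Real.log n := Real.log_le_log hant0 hant
      have : ε n * Real.log (a n + t n) ≤ ε n * Real.log n :=
        mul_le_mul_of_nonneg_left hle (hεpos n).le
      calc ε n * Real.log (a n + t n) ≤ ε n * Real.log n := this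
        _ = Real.exp (-x) := by rw [hεeq n hn]; field_simp
  -- Gamma (t n) → 1
  have h3 : Filter.Tendsto (fun n : ℕ => Real.Gamma (t n)) Filter.atTop (nhds 1) := by
    have ht1 : Filter.Tendsto t Filter.atTop (nhds 1) := by
      simpa using tendsto_const_nhds.sub hε0
    have hcont : ContinuousAt Real.Gamma 1 := by
      refine (Real.differentiableAt_Gamma ?_).continuousAt
      intro m h
      have hm : (0:ℝ) ≤ (m:ℝ) := Nat.cast_nonneg m
      linarith
    have := hcont.tendsto.comp ht1
    simpa [Real.Gamma_one, Function.comp_def] using this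
  -- lower and upper bounding functions converge to the limit
  have hL : Filter.Tendsto (fun n : ℕ =>
      Real.exp (-(ε n * Real.log (a n + t n))) / Real.Gamma (t n)) Filter.atTop
      (nhds (Real.exp (-Real.exp (-x)))) := by
    have := ((Real.continuous_exp.tendsto _).comp h2.neg).div h3 one_ne_zero
    simpa [Function.comp_def, Pi.div_def] using this
  have hU : Filter.Tendsto (fun n : ℕ =>
      Real.exp (-(ε n * Real.log (a n))) / Real.Gamma (t n)) Filter.atTop
      (nhds (Real.exp (-Real.exp (-x)))) := by
    have := ((Real.continuous_exp.tendsto _).comp h1.neg).div h3 one_ne_zero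
    simpa [Function.comp_def, Pi.div_def] using this
  have hbound : ∀ᶠ n : ℕ in Filter.atTop,
      Real.exp (-(ε n * Real.log (a n + t n))) / Real.Gamma (t n)
        ≤ 1 / (((n : ℝ) - 1) *
            Be ((n : ℝ) - 1) (1 - Real.exp (-(Real.log (Real.log n) + x)))) ∧
      1 / (((n : ℝ) - 1) *
            Be ((n : ℝ) - 1) (1 - Real.exp (-(Real.log (Real.log n) + x))))
        ≤ Real.exp (-(ε n * Real.log (a n))) / Real.Gamma (t n) := by
    filter_upwards [Filter.eventually_ge_atTop 3, hεlt1] with n hn hε1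
    have h1n : (1:ℝ) < (n:ℝ) := by exact_mod_cast Nat.lt_of_lt_of_le (by norm_num) hn
    have ha0 : 0 < a n := by simp only [hadef]; linarith
    have ht0 : 0 < t n := by simp only [htdef]; linarith [hεpos n]
    have ht1' : t n ≤ 1 := by simp only [htdef]; linarith [hεpos n]
    have hat0 : 0 < a n + t n := by linarith
    have hGa := Real.Gamma_pos_of_pos ha0
    have hGt := Real.Gamma_pos_of_pos ht0
    have hGat := Real.Gamma_pos_of_pos hat0
    have hFeq : 1 / (((n : ℝ) - 1) *
        Be ((n : ℝ) - 1) (1 - Real.exp (-(Real.log (Real.log n) + x))))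
        = Real.Gamma (a n + t n) / (a n * Real.Gamma (a n) * Real.Gamma (t n)) := by
      have ht : (1 : ℝ) - Real.exp (-(Real.log (Real.log n) + x)) = t n := rfl
      rw [ht]
      show 1 / (a n * Be (a n) (t n)) = _
      rw [Be, div_eq_div_iff (by positivity) (by positivity)]
      field_simp
    have hmε : t n - 1 = -(ε n) := by simp only [htdef]; ring
    rw [hFeq]
    constructor
    · rw [div_le_div_iff₀ (by positivity) (by positivity)]
      have hlow := gamma_lower ha0 ht0.le ht1'
      rw [hmε] at hlow
      have hneg : (-(ε n) : ℝ) * Real.log (a n + t n) = -(ε n * Real.log (a n + t n)) := by ring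
      rw [hneg] at hlow
      calc Real.exp (-(ε n * Real.log (a n + t n))) * (a n * Real.Gamma (a n) * Real.Gamma (t n))
          = (a n * Real.Gamma (a n) * Real.exp (-(ε n * Real.log (a n + t n)))) * Real.Gamma (t n) := by
            ring
        _ ≤ Real.Gamma (a n + t n) * Real.Gamma (t n) :=
            mul_le_mul_of_nonneg_right hlow hGt.le
    · rw [div_le_div_iff₀ (by positivity) (by positivity)]
      have hup := gamma_upper ha0 ht0.le ht1'
      have key : Real.exp (-(ε n * Real.log (a n))) * a n
          = Real.exp (t n * Real.log (a n)) := by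
        have h4 : t n * Real.log (a n) = -(ε n * Real.log (a n)) + Real.log (a n) := by
          simp only [htdef]; ring
        rw [h4, Real.exp_add, Real.exp_log ha0]
      calc Real.Gamma (a n + t n) * Real.Gamma (t n)
          ≤ (Real.Gamma (a n) * Real.exp (t n * Real.log (a n))) * Real.Gamma (t n) :=
            mul_le_mul_of_nonneg_right hup hGt.le
        _ = Real.exp (-(ε n * Real.log (a n))) * (a n * Real.Gamma (a n) * Real.Gamma (t n)) := by
            rw [← key]; ring
  exact tendsto_of_tendsto_of_tendsto_of_le_of_le' hL hU
    (hbound.mono fun n h => h.1) (hbound.mono fun n h => h.2)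
end
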